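/- Let B be the incidence matrix of a symmetric 2-(v,k,λ) design and let a be a complex number of absolute value 1 such that the matrix obtained from B by replacing every 0 entry with a is a complex Hadamard matrix of order v. Then Re(a) = 1 − v(v−1)/(2k(v−k)). -/

import Mathlib

open Matrix

/-- `H` is a complex Hadamard matrix: unimodular entries and `H Hᴴ = n • I`. -/
def IsCHadamard {n : Type*} [Fintype n] [DecidableEq n] (H : Matrix n n ℂ) : Prop :=
  (∀ i j, ‖H i j‖ = 1) ∧
    H * H.conjTranspose = (Fintype.card n : ℂ) • 1

/-- `B` is the incidence matrix (over `ℂ`, with `0`/`1` entries) of a symmetric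
`2-(v,k,λ)` design. -/
def IsIncidence (v k lam : ℕ) (B : Matrix (Fin v) (Fin v) ℂ) : Prop :=
  (∀ i j, B i j = 0 ∨ B i j = 1) ∧
    (∀ i, ∑ j, B i j = (k : ℂ)) ∧ (∀ j, ∑ i, B i j = (k : ℂ)) ∧
    B * B.transpose = ((k : ℂ) - (lam : ℂ)) • 1 + (lam : ℂ) • Matrix.of (fun _ _ => (1 : ℂ))

theorem stmt1 (v k lam : ℕ) (hlk : lam < k) (hkv : k < v)
    (B : Matrix (Fin v) (Fin v) ℂ) (hB : IsIncidence v k lam B)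
    (a : ℂ) (ha : ‖a‖ = 1)
    (hH : IsCHadamard (Matrix.of fun i j => if B i j = 0 then a else B i j)) :
    a.re = 1 - ((v : ℝ) * ((v : ℝ) - 1)) / (2 * (k : ℝ) * ((v : ℝ) - (k : ℝ))) := by
  obtain ⟨hent, hrow, hcol, hBBt⟩ := hB
  obtain ⟨-, hHH⟩ := hH
  have hk1 : 1 ≤ k := by omega
  have hv2 : 2 ≤ v := by omega
  set i0 : Fin v := ⟨0, by omega⟩ with hi0
  set i1 : Fin v := ⟨1, by omega⟩ with hi1
  have hne : i0 ≠ i1 := by simp [hi0, hi1, Fin.ext_iff]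
  have haa : a * (starRingEnd ℂ) a = 1 := by
    rw [Complex.mul_conj, Complex.normSq_eq_norm_sq, ha]; norm_num
  have hoff : (∑ x, (if B i0 x = 0 then a else B i0 x) *
      (starRingEnd ℂ) (if B i1 x = 0 then a else B i1 x)) = 0 := by
    have h := congrFun (congrFun hHH i0) i1
    simpa [Matrix.mul_apply, Matrix.conjTranspose_apply, Matrix.smul_apply,
      Matrix.one_apply_ne hne] using h
  have hS : (∑ x, B i0 x * B i1 x) = (lam : ℂ) := by
    have h := congrFun (congrFun hBBt i0) i1
    simpa [Matrix.mul_apply, Matrix.transpose_apply, Matrix.smul_apply,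
      Matrix.one_apply_ne hne] using h
  have hpt : ∀ x, (if B i0 x = 0 then a else B i0 x) *
      (starRingEnd ℂ) (if B i1 x = 0 then a else B i1 x)
      = (2 - a - (starRingEnd ℂ) a) * (B i0 x * B i1 x)
        + ((starRingEnd ℂ) a - 1) * B i0 x + (a - 1) * B i1 x + 1 := by
    intro x
    rcases hent i0 x with h | h <;> rcases hent i1 x with h' | h'
    · simpa [h, h'] using haa
    · simp [h, h']
    · simp [h, h']
    · simp [h, h']; ring
  rw [Finset.sum_congr rfl fun x _ => hpt x] at hoff
  simp only [Finset.sum_add_distrib, ← Finset.mul_sum, hS, hrow, Finset.sum_const,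
    Finset.card_univ, Fintype.card_fin, nsmul_eq_mul, mul_one] at hoff
  -- counting identity
  have h1 : ∑ j, (B * B.transpose) i0 j = (k : ℂ) * k := by
    simp only [Matrix.mul_apply, Matrix.transpose_apply]
    rw [Finset.sum_comm]
    simp_rw [← Finset.mul_sum, hcol]
    rw [← Finset.sum_mul, hrow]
  have e2C : (k : ℂ) * k = ((k : ℂ) - lam) + lam * v := by
    rw [← h1, hBBt]
    simp [Matrix.add_apply, Matrix.smul_apply, Matrix.one_apply, Finset.sum_add_distrib,
      Finset.sum_ite_eq, Finset.mem_univ, mul_one, Finset.sum_const, Finset.card_univ]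
    ring
  have e2R : (k : ℝ) * k = ((k : ℝ) - lam) + lam * v := by exact_mod_cast e2C
  have keyR : (2 - 2 * a.re) * (lam : ℝ) + (2 * a.re - 2) * k + v = 0 := by
    have hC : (((2 - 2 * a.re) * (lam : ℝ) + (2 * a.re - 2) * k + v : ℝ) : ℂ) = 0 := by
      have hac : a + (starRingEnd ℂ) a = 2 * (a.re : ℂ) := by
        rw [Complex.add_conj]; push_cast; ring
      push_cast
      linear_combination hoff + ((lam : ℂ) - k) * hac
    exact_mod_cast hC
  have hK : (0 : ℝ) < k := by exact_mod_cast hk1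
  have hVK : (0 : ℝ) < (v : ℝ) - k := by
    have : (k : ℝ) < v := by exact_mod_cast hkv
    linarith
  have hV1 : (0 : ℝ) < (v : ℝ) - 1 := by
    have : (2 : ℝ) ≤ v := by exact_mod_cast hv2
    linarith
  have hKL : (0 : ℝ) < (k : ℝ) - lam := by
    have : (lam : ℝ) < k := by exact_mod_cast hlk
    linarith
  field_simp
  nlinarith [keyR, e2R, mul_pos hK hVK, sq_nonneg ((k:ℝ) - lam)]
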